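/- For every regular spanner P on a variable set X and every domination rule D on X that is itself a regular spanner, the skyline η_D P is a regular spanner (i.e., it is definable by a sequential variable-set automaton). -/

import Mathlib

namespace DocSpanners

/-- A span: a pair of endpoint positions `[i, j⟩`. -/
abbrev Span : Type := ℕ × ℕ

/-- `s` is a span of document `d`. -/
def IsSpanOf {α : Type} (d : List α) (s : Span) : Prop :=
  s.1 ≤ s.2 ∧ s.2 ≤ d.length

/-- A (schemaless) mapping over variable type `V`: a partial assignment of spans. -/
abbrev Mapping (V : Type) : Type := V → Option Span

/-- `m` is a mapping of document `d`. -/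
def MappingOf {α V : Type} (d : List α) (m : Mapping V) : Prop :=
  ∀ x s, m x = some s → IsSpanOf d s

/-- A spanner: maps documents to sets of mappings. -/
abbrev Spanner (α V : Type) : Type := List α → Set (Mapping V)

/-- Labels of a variable-set automaton: letters and variable markers. -/
inductive Label (α V : Type) : Type where
  | letter (a : α)
  | vopen (x : V)
  | vclose (x : V)
deriving DecidableEq

/-- The sequence of letters of a ref-word. -/
def letters {α V : Type} (w : List (Label α V)) : List α :=
  w.filterMap fun l => match l with
    | Label.letter a => some a
    | _ => none

/-- A ref-word is valid if for each variable, either its markers do not appear, or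
the opening and closing markers appear exactly once with the opening first. -/
def ValidRef {α V : Type} [DecidableEq α] [DecidableEq V] (w : List (Label α V)) : Prop :=
  ∀ x : V,
    (Label.vopen x ∉ w ∧ Label.vclose x ∉ w) ∨
    (w.count (Label.vopen x) = 1 ∧ w.count (Label.vclose x) = 1 ∧
      w.idxOf (Label.vopen x) < w.idxOf (Label.vclose x))

/-- The mapping defined by a (valid) ref-word: each marked variable is sent to the
span delimited by the positions at which its markers are read. -/
def refMapping {α V : Type} [DecidableEq α] [DecidableEq V] (w : List (Label α V)) :
    Mapping V := fun x =>
  if Label.vopen x ∈ w then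
    some ((letters (w.take (w.idxOf (Label.vopen x)))).length,
          (letters (w.take (w.idxOf (Label.vclose x)))).length)
  else none

/-- A variable-set automaton with state type `Q`. -/
structure VA (α V Q : Type) : Type where
  init : Q
  final : Set Q
  trans : Q → Label α V → Q → Prop

/-- Paths in a VA. -/
inductive VA.Path {α V Q : Type} (A : VA α V Q) : Q → List (Label α V) → Q → Prop where
  | nil (q : Q) : VA.Path A q [] q
  | cons {q q' q'' : Q} {l : Label α V} {w : List (Label α V)} :
      A.trans q l q' → VA.Path A q' w q'' → VA.Path A q (l :: w) q''

/-- The VA accepts the ref-word `w` (an accepting run reads `w`). -/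
def VA.AcceptsRef {α V Q : Type} (A : VA α V Q) (w : List (Label α V)) : Prop :=
  ∃ qf ∈ A.final, A.Path A.init w qf

/-- A VA is sequential if every accepting run is valid. -/
def VA.Sequential {α V Q : Type} [DecidableEq α] [DecidableEq V] (A : VA α V Q) : Prop :=
  ∀ w, A.AcceptsRef w → ValidRef w

/-- The spanner defined by a (sequential) VA. -/
def VA.spanner {α V Q : Type} [DecidableEq α] [DecidableEq V] (A : VA α V Q) :
    Spanner α V := fun d =>
  {m | ∃ w, A.AcceptsRef w ∧ letters w = d ∧ refMapping w = m}

/-- A spanner is regular if it is defined by some sequential VA with finitely many states. -/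
def IsRegular {α V : Type} [DecidableEq α] [DecidableEq V] (P : Spanner α V) : Prop :=
  ∃ (Q : Type) (_ : Fintype Q) (A : VA α V Q), A.Sequential ∧ A.spanner = P

/-- The skyline operator: keep only the mappings of `P d` that are maximal under `R d`. -/
def skyline {α V : Type} (P : Spanner α V)
    (R : List α → Mapping V → Mapping V → Prop) : Spanner α V := fun d =>
  {m | m ∈ P d ∧ ∀ m' ∈ P d, m' ≠ m → ¬ R d m m'}

/-- The variable inclusion domination relation: `m2` extends `m1`. -/
def varIncRel {V : Type} (m1 m2 : Mapping V) : Prop :=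
  ∀ x s, m1 x = some s → m2 x = some s

/-- Two mappings have the same domain. -/
def sameDom {V : Type} (m1 m2 : Mapping V) : Prop :=
  ∀ x, m1 x = none ↔ m2 x = none

/-- The span inclusion domination relation. -/
def spanIncRel {V : Type} (m1 m2 : Mapping V) : Prop :=
  sameDom m1 m2 ∧
    ∀ x s1 s2, m1 x = some s1 → m2 x = some s2 → s2.1 ≤ s1.1 ∧ s1.2 ≤ s2.2

/-- The left-to-right domination relation: same start, `m2` no shorter. -/
def ltrRel {V : Type} (m1 m2 : Mapping V) : Prop :=
  sameDom m1 m2 ∧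
    ∀ x s1 s2, m1 x = some s1 → m2 x = some s2 →
      s1.1 = s2.1 ∧ s1.2 - s1.1 ≤ s2.2 - s2.1

/-- The span length domination relation: `m2`'s spans are no shorter. -/
def spanLenRel {V : Type} (m1 m2 : Mapping V) : Prop :=
  sameDom m1 m2 ∧
    ∀ x s1 s2, m1 x = some s1 → m2 x = some s2 → s1.2 - s1.1 ≤ s2.2 - s2.1


/-- The pre-domination relation on a document `d` defined by a spanner `D` on
variables `V ⊕ V` (left = plain copies, right = annotated copies `x†`). -/
def ruleRel {α V : Type} (D : Spanner α (V ⊕ V)) (d : List α)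
    (m1 m2 : Mapping V) : Prop :=
  ∃ m ∈ D d, (∀ x, m (Sum.inl x) = m1 x) ∧ (∀ x, m (Sum.inr x) = m2 x)

/-- `D` is a domination rule: on every document, the relation it defines is a
partial order (reflexive on the mappings of the document, transitive, antisymmetric). -/
def IsDomRule {α V : Type} (D : Spanner α (V ⊕ V)) : Prop :=
  ∀ d : List α,
    (∀ m : Mapping V, MappingOf d m → ruleRel D d m m) ∧
    (∀ m1 m2 m3 : Mapping V, ruleRel D d m1 m2 → ruleRel D d m2 m3 → ruleRel D d m1 m3) ∧
    (∀ m1 m2 : Mapping V, ruleRel D d m1 m2 → ruleRel D d m2 m1 → m1 = m2)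


/-! ### Auxiliary machinery -/

set_option linter.unusedSectionVars false

section Aux

variable {α V : Type} [DecidableEq α] [DecidableEq V]

@[simp] lemma letters_nil : letters ([] : List (Label α V)) = [] := by simp [letters]

lemma letters_cons_letter (a : α) (w : List (Label α V)) :
    letters (Label.letter a :: w) = a :: letters w := rfl

lemma letters_cons_vopen (x : V) (w : List (Label α V)) :
    letters (Label.vopen x :: w) = letters w := rfl

lemma letters_cons_vclose (x : V) (w : List (Label α V)) :
    letters (Label.vclose x :: w) = letters w := rfl

lemma letters_cons_marker {c : Label α V} (hm : ∀ a, c ≠ Label.letter a)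
    (w : List (Label α V)) : letters (c :: w) = letters w := by
  cases c with
  | letter a => exact absurd rfl (hm a)
  | vopen x => rfl
  | vclose x => rfl

lemma letters_append (u v : List (Label α V)) :
    letters (u ++ v) = letters u ++ letters v := by
  simp [letters, List.filterMap_append]

/-- A list of labels containing no letters. -/
def MO (l : List (Label α V)) : Prop := ∀ a : α, Label.letter a ∉ l

lemma MO_nil : MO ([] : List (Label α V)) := by intro a h; simp at h

lemma MO_cons {c : Label α V} {l : List (Label α V)} (h : MO (c :: l)) :
    (∀ a, c ≠ Label.letter a) ∧ MO l := by
  constructor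
  · intro a hc; exact h a (by simp [hc])
  · intro a ha; exact h a (by simp [ha])

lemma letters_eq_nil_of_MO {l : List (Label α V)} (h : MO l) : letters l = [] := by
  induction l with
  | nil => simp [letters]
  | cons c l ih =>
    obtain ⟨hc, hl⟩ := MO_cons h
    rw [letters_cons_marker hc, ih hl]

/-- The letter position at which label `c` first occurs in `w`. -/
def pos (w : List (Label α V)) (c : Label α V) : ℕ :=
  (letters (w.take (w.idxOf c))).length

lemma refMapping_def (w : List (Label α V)) (x : V) :
    refMapping w x = if Label.vopen x ∈ w then
      some (pos w (Label.vopen x), pos w (Label.vclose x)) else none := rfl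

lemma pos_cons_self (c : Label α V) (w : List (Label α V)) : pos (c :: w) c = 0 := by
  simp [pos, List.idxOf_cons_self]

lemma pos_cons_letter {a : α} {c : Label α V} (h : c ≠ Label.letter a)
    (w : List (Label α V)) : pos (Label.letter a :: w) c = pos w c + 1 := by
  have : List.idxOf c (Label.letter a :: w) = (List.idxOf c w).succ :=
    List.idxOf_cons_ne _ (fun hh => h hh.symm)
  simp [pos, this, List.take_succ_cons, letters_cons_letter]

lemma pos_cons_marker {c₀ c : Label α V} (hm : ∀ a, c₀ ≠ Label.letter a)
    (h : c₀ ≠ c) (w : List (Label α V)) : pos (c₀ :: w) c = pos w c := by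
  have : List.idxOf c (c₀ :: w) = (List.idxOf c w).succ :=
    List.idxOf_cons_ne _ h
  simp [pos, this, List.take_succ_cons, letters_cons_marker hm]

/-- The marker blocks of a ref-word: the (letters w).length + 1 groups of markers
between consecutive letters. -/
def blocks : List (Label α V) → List (List (Label α V))
  | [] => [[]]
  | Label.letter _ :: w => [] :: blocks w
  | Label.vopen x :: w => (Label.vopen x :: (blocks w).headI) :: (blocks w).tail
  | Label.vclose x :: w => (Label.vclose x :: (blocks w).headI) :: (blocks w).tail

lemma blocks_ne_nil (w : List (Label α V)) : blocks w ≠ [] := by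
  cases w with
  | nil => simp [blocks]
  | cons c w => cases c <;> simp [blocks]

lemma blocks_eq_cons (w : List (Label α V)) :
    blocks w = (blocks w).headI :: (blocks w).tail := by
  rcases h : blocks w with _ | ⟨b, bs⟩
  · exact absurd h (blocks_ne_nil w)
  · simp

lemma blocks_cons_marker {c : Label α V} (hm : ∀ a, c ≠ Label.letter a)
    (w : List (Label α V)) :
    blocks (c :: w) = (c :: (blocks w).headI) :: (blocks w).tail := by
  cases c with
  | letter a => exact absurd rfl (hm a)
  | vopen x => rfl
  | vclose x => rfl

lemma blocks_length (w : List (Label α V)) :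
    (blocks w).length = (letters w).length + 1 := by
  induction w with
  | nil => rfl
  | cons c w ih =>
    cases c with
    | letter a => simp [blocks, letters_cons_letter, ih]
    | vopen x =>
      rw [blocks_cons_marker (by simp) w, letters_cons_vopen]
      have := blocks_eq_cons w
      simp only [List.length_cons, ← ih]
      conv_rhs => rw [this]
      simp
    | vclose x =>
      rw [blocks_cons_marker (by simp) w, letters_cons_vclose]
      have := blocks_eq_cons w
      simp only [List.length_cons, ← ih]
      conv_rhs => rw [this]
      simp

/-- The `i`-th marker block of `w`. -/
def sblk (w : List (Label α V)) (i : ℕ) : List (Label α V) :=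
  (blocks w).getD i []

lemma sblk_nil (i : ℕ) : sblk ([] : List (Label α V)) i = [] := by
  cases i <;> simp [sblk, blocks]

lemma sblk_cons_letter_zero (a : α) (w : List (Label α V)) :
    sblk (Label.letter a :: w) 0 = [] := rfl

lemma sblk_cons_letter_succ (a : α) (w : List (Label α V)) (i : ℕ) :
    sblk (Label.letter a :: w) (i + 1) = sblk w i := by
  simp [sblk, blocks]

lemma sblk_cons_marker_zero {c : Label α V} (hm : ∀ a, c ≠ Label.letter a)
    (w : List (Label α V)) : sblk (c :: w) 0 = c :: sblk w 0 := by
  rw [sblk, blocks_cons_marker hm]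
  have := blocks_eq_cons w
  simp [sblk]
  conv_rhs => rw [this]
  simp

lemma sblk_cons_marker_succ {c : Label α V} (hm : ∀ a, c ≠ Label.letter a)
    (w : List (Label α V)) (i : ℕ) : sblk (c :: w) (i + 1) = sblk w (i + 1) := by
  rw [sblk, blocks_cons_marker hm]
  conv_rhs => rw [sblk, blocks_eq_cons w]
  simp

end Aux

section Aux2

variable {α V : Type} [DecidableEq α] [DecidableEq V]

lemma mem_of_mem_sblk {w : List (Label α V)} {c : Label α V} {i : ℕ}
    (h : c ∈ sblk w i) : c ∈ w ∧ ∀ a, c ≠ Label.letter a := by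
  induction w generalizing i with
  | nil => rw [sblk_nil] at h; simp at h
  | cons c₀ w ih =>
    cases c₀ with
    | letter a =>
      cases i with
      | zero => rw [sblk_cons_letter_zero] at h; simp at h
      | succ i =>
        rw [sblk_cons_letter_succ] at h
        obtain ⟨h1, h2⟩ := ih h
        exact ⟨List.mem_cons_of_mem _ h1, h2⟩
    | vopen x =>
      cases i with
      | zero =>
        rw [sblk_cons_marker_zero (by simp)] at h
        rcases List.mem_cons.mp h with h | h
        · exact ⟨by simp [h], by simp [h]⟩
        · obtain ⟨h1, h2⟩ := ih (i := 0) h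
          exact ⟨List.mem_cons_of_mem _ h1, h2⟩
      | succ i =>
        rw [sblk_cons_marker_succ (by simp)] at h
        obtain ⟨h1, h2⟩ := ih h
        exact ⟨List.mem_cons_of_mem _ h1, h2⟩
    | vclose x =>
      cases i with
      | zero =>
        rw [sblk_cons_marker_zero (by simp)] at h
        rcases List.mem_cons.mp h with h | h
        · exact ⟨by simp [h], by simp [h]⟩
        · obtain ⟨h1, h2⟩ := ih (i := 0) h
          exact ⟨List.mem_cons_of_mem _ h1, h2⟩
      | succ i =>
        rw [sblk_cons_marker_succ (by simp)] at h
        obtain ⟨h1, h2⟩ := ih h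
        exact ⟨List.mem_cons_of_mem _ h1, h2⟩

lemma exists_sblk_of_mem {w : List (Label α V)} {c : Label α V}
    (hmem : c ∈ w) (hm : ∀ a, c ≠ Label.letter a) : ∃ i, c ∈ sblk w i := by
  induction w with
  | nil => simp at hmem
  | cons c₀ w ih =>
    rcases List.mem_cons.mp hmem with rfl | hmem'
    · exact ⟨0, by rw [sblk_cons_marker_zero hm]; simp⟩
    · obtain ⟨i, hi⟩ := ih hmem'
      cases c₀ with
      | letter a => exact ⟨i + 1, by rw [sblk_cons_letter_succ]; exact hi⟩
      | vopen x =>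
        cases i with
        | zero => exact ⟨0, by rw [sblk_cons_marker_zero (by simp)]; exact List.mem_cons_of_mem _ hi⟩
        | succ i => exact ⟨i + 1, by rw [sblk_cons_marker_succ (by simp)]; exact hi⟩
      | vclose x =>
        cases i with
        | zero => exact ⟨0, by rw [sblk_cons_marker_zero (by simp)]; exact List.mem_cons_of_mem _ hi⟩
        | succ i => exact ⟨i + 1, by rw [sblk_cons_marker_succ (by simp)]; exact hi⟩

/-- Key lemma: a marker occurring exactly once, lying in block `i`, has letter-position `i`. -/
lemma pos_eq_of_mem_sblk {w : List (Label α V)} {c : Label α V} {i : ℕ}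
    (hm : ∀ a, c ≠ Label.letter a) (hcount : w.count c = 1) (h : c ∈ sblk w i) :
    pos w c = i := by
  induction w generalizing i with
  | nil => rw [sblk_nil] at h; simp at h
  | cons c₀ w ih =>
    by_cases hc : c₀ = c
    · subst hc
      have hnotmem : c₀ ∉ w := by
        have := hcount
        rw [List.count_cons_self] at this
        have h0 : w.count c₀ = 0 := by omega
        exact List.count_eq_zero.mp h0
      cases i with
      | zero => exact pos_cons_self _ _
      | succ i =>
        exfalso
        have : c₀ ∈ sblk w (i+1) := by
          cases c₀ with
          | letter a => exact absurd rfl (hm a)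
          | vopen x => rw [sblk_cons_marker_succ (by simp)] at h; exact h
          | vclose x => rw [sblk_cons_marker_succ (by simp)] at h; exact h
        exact hnotmem (mem_of_mem_sblk this).1
    · have hcount' : w.count c = 1 := by
        rwa [List.count_cons_of_ne hc] at hcount
      cases c₀ with
      | letter a =>
        cases i with
        | zero => rw [sblk_cons_letter_zero] at h; simp at h
        | succ i =>
          rw [sblk_cons_letter_succ] at h
          rw [pos_cons_letter (hm a), ih hcount' h]
      | vopen x =>
        rw [pos_cons_marker (by simp) hc]
        cases i with
        | zero =>
          rw [sblk_cons_marker_zero (by simp)] at h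
          rcases List.mem_cons.mp h with h' | h'
          · exact absurd h'.symm hc
          · exact ih hcount' h'
        | succ i =>
          rw [sblk_cons_marker_succ (by simp)] at h
          exact ih hcount' h
      | vclose x =>
        rw [pos_cons_marker (by simp) hc]
        cases i with
        | zero =>
          rw [sblk_cons_marker_zero (by simp)] at h
          rcases List.mem_cons.mp h with h' | h'
          · exact absurd h'.symm hc
          · exact ih hcount' h'
        | succ i =>
          rw [sblk_cons_marker_succ (by simp)] at h
          exact ih hcount' h

lemma valid_close_of_open {w : List (Label α V)} (hv : ValidRef w) {x : V}
    (h : Label.vopen x ∈ w) : Label.vclose x ∈ w := by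
  rcases hv x with ⟨h1, _⟩ | ⟨_, h2, _⟩
  · exact absurd h h1
  · exact List.count_pos_iff.mp (by omega)

lemma valid_open_of_close {w : List (Label α V)} (hv : ValidRef w) {x : V}
    (h : Label.vclose x ∈ w) : Label.vopen x ∈ w := by
  rcases hv x with ⟨_, h1⟩ | ⟨h2, _, _⟩
  · exact absurd h h1
  · exact List.count_pos_iff.mp (by omega)

lemma valid_count_open {w : List (Label α V)} (hv : ValidRef w) {x : V}
    (h : Label.vopen x ∈ w) : w.count (Label.vopen x) = 1 := by
  rcases hv x with ⟨h1, _⟩ | ⟨h2, _, _⟩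
  · exact absurd h h1
  · exact h2

lemma valid_count_close {w : List (Label α V)} (hv : ValidRef w) {x : V}
    (h : Label.vclose x ∈ w) : w.count (Label.vclose x) = 1 := by
  rcases hv x with ⟨_, h1⟩ | ⟨_, h2, _⟩
  · exact absurd h h1
  · exact h2

end Aux2

section Aux3

variable {α V V' : Type} [DecidableEq α] [DecidableEq V] [DecidableEq V']

lemma pos_open_of_valid {w : List (Label α V)} (hv : ValidRef w) {x : V} {i : ℕ}
    (h : Label.vopen x ∈ sblk w i) : pos w (Label.vopen x) = i :=
  pos_eq_of_mem_sblk (by simp) (valid_count_open hv (mem_of_mem_sblk h).1) h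

lemma pos_close_of_valid {w : List (Label α V)} (hv : ValidRef w) {x : V} {i : ℕ}
    (h : Label.vclose x ∈ sblk w i) : pos w (Label.vclose x) = i :=
  pos_eq_of_mem_sblk (by simp) (valid_count_close hv (mem_of_mem_sblk h).1) h

lemma mem_sblk_iff_of_valid_open {w : List (Label α V)} (hv : ValidRef w) {x : V} {i : ℕ} :
    Label.vopen x ∈ sblk w i ↔ (Label.vopen x ∈ w ∧ pos w (Label.vopen x) = i) := by
  constructor
  · intro h
    exact ⟨(mem_of_mem_sblk h).1, pos_open_of_valid hv h⟩
  · rintro ⟨hmem, hpos⟩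
    obtain ⟨j, hj⟩ := exists_sblk_of_mem hmem (by simp)
    have := pos_open_of_valid hv hj
    rwa [show i = j by omega]

lemma mem_sblk_iff_of_valid_close {w : List (Label α V)} (hv : ValidRef w) {x : V} {i : ℕ} :
    Label.vclose x ∈ sblk w i ↔ (Label.vclose x ∈ w ∧ pos w (Label.vclose x) = i) := by
  constructor
  · intro h
    exact ⟨(mem_of_mem_sblk h).1, pos_close_of_valid hv h⟩
  · rintro ⟨hmem, hpos⟩
    obtain ⟨j, hj⟩ := exists_sblk_of_mem hmem (by simp)
    have := pos_close_of_valid hv hj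
    rwa [show i = j by omega]

/-- Block-alignment transfers `refMapping` along a variable renaming. -/
lemma refMapping_eq_of_blocks (g : V → V') {w : List (Label α V)} {u : List (Label α V')}
    (hw : ValidRef w) (hu : ValidRef u)
    (hcond : ∀ i x, (Label.vopen x ∈ sblk w i ↔ Label.vopen (g x) ∈ sblk u i) ∧
      (Label.vclose x ∈ sblk w i ↔ Label.vclose (g x) ∈ sblk u i)) :
    ∀ x, refMapping u (g x) = refMapping w x := by
  intro x
  rw [refMapping_def, refMapping_def]
  by_cases hopen : Label.vopen x ∈ w
  · obtain ⟨i, hi⟩ := exists_sblk_of_mem hopen (by simp)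
    have hi' : Label.vopen (g x) ∈ sblk u i := (hcond i x).1.mp hi
    have hmem' : Label.vopen (g x) ∈ u := (mem_of_mem_sblk hi').1
    have hclosew : Label.vclose x ∈ w := valid_close_of_open hw hopen
    obtain ⟨j, hj⟩ := exists_sblk_of_mem hclosew (by simp)
    have hj' : Label.vclose (g x) ∈ sblk u j := (hcond j x).2.mp hj
    rw [if_pos hopen, if_pos hmem']
    rw [pos_open_of_valid hw hi, pos_open_of_valid hu hi',
        pos_close_of_valid hw hj, pos_close_of_valid hu hj']
  · have : Label.vopen (g x) ∉ u := by
      intro hmem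
      obtain ⟨i, hi⟩ := exists_sblk_of_mem hmem (by simp)
      exact hopen (mem_of_mem_sblk ((hcond i x).1.mpr hi)).1
    rw [if_neg hopen, if_neg this]

/-- If some block of `w` contains a marker that the corresponding block of `w'` misses,
the two (valid) ref-words define different mappings. -/
lemma refMapping_ne_of_mem_not_mem {w w' : List (Label α V)}
    (hw : ValidRef w) (hw' : ValidRef w') {c : Label α V} {i : ℕ}
    (h1 : c ∈ sblk w i) (h2 : c ∉ sblk w' i) : refMapping w ≠ refMapping w' := by
  intro heq
  obtain ⟨hmem, hmk⟩ := mem_of_mem_sblk h1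
  cases c with
  | letter a => exact (hmk a) rfl
  | vopen x =>
    have hval : refMapping w x = refMapping w' x := by rw [heq]
    rw [refMapping_def, refMapping_def, if_pos hmem] at hval
    by_cases hmem' : Label.vopen x ∈ w'
    · rw [if_pos hmem'] at hval
      have : pos w (Label.vopen x) = pos w' (Label.vopen x) := by
        have := Option.some.inj hval
        exact congrArg Prod.fst this
      rw [pos_open_of_valid hw h1] at this
      exact h2 ((mem_sblk_iff_of_valid_open hw').mpr ⟨hmem', this.symm⟩)
    · rw [if_neg hmem'] at hval
      exact Option.some_ne_none _ hval
  | vclose x =>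
    have hopen : Label.vopen x ∈ w := valid_open_of_close hw hmem
    have hval : refMapping w x = refMapping w' x := by rw [heq]
    rw [refMapping_def, refMapping_def, if_pos hopen] at hval
    by_cases hmem' : Label.vopen x ∈ w'
    · rw [if_pos hmem'] at hval
      have hcl' : Label.vclose x ∈ w' := valid_close_of_open hw' hmem'
      have : pos w (Label.vclose x) = pos w' (Label.vclose x) := by
        have := Option.some.inj hval
        exact congrArg Prod.snd this
      rw [pos_close_of_valid hw h1] at this
      exact h2 ((mem_sblk_iff_of_valid_close hw').mpr ⟨hcl', this.symm⟩)
    · rw [if_neg hmem'] at hval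
      have : Label.vclose x ∉ w' := fun hc => hmem' (valid_open_of_close hw' hc)
      exact Option.some_ne_none _ hval

lemma refMapping_ne_of_sblk_ne {w w' : List (Label α V)}
    (hw : ValidRef w) (hw' : ValidRef w') {i : ℕ}
    (h : {c : Label α V | c ∈ sblk w i} ≠ {c | c ∈ sblk w' i}) :
    refMapping w ≠ refMapping w' := by
  have : ∃ c, (c ∈ sblk w i ∧ c ∉ sblk w' i) ∨ (c ∈ sblk w' i ∧ c ∉ sblk w i) := by
    by_contra hno
    apply h
    ext c
    constructor
    · intro hc
      by_contra hc'
      exact hno ⟨c, Or.inl ⟨hc, hc'⟩⟩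
    · intro hc
      by_contra hc'
      exact hno ⟨c, Or.inr ⟨hc, hc'⟩⟩
  obtain ⟨c, ⟨h1, h2⟩ | ⟨h1, h2⟩⟩ := this
  · exact refMapping_ne_of_mem_not_mem hw hw' h1 h2
  · exact (refMapping_ne_of_mem_not_mem hw' hw h1 h2).symm

/-- Converse: equality of `refMapping` along a renaming gives block alignment. -/
lemma blocks_cond_of_refMapping (g : V → V') {w : List (Label α V)} {u : List (Label α V')}
    (hw : ValidRef w) (hu : ValidRef u)
    (hmap : ∀ x, refMapping u (g x) = refMapping w x) :
    ∀ i x, (Label.vopen x ∈ sblk w i ↔ Label.vopen (g x) ∈ sblk u i) ∧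
      (Label.vclose x ∈ sblk w i ↔ Label.vclose (g x) ∈ sblk u i) := by
  intro i x
  have hval := hmap x
  rw [refMapping_def, refMapping_def] at hval
  constructor
  · rw [mem_sblk_iff_of_valid_open hw, mem_sblk_iff_of_valid_open hu]
    by_cases hmem : Label.vopen x ∈ w
    · rw [if_pos hmem] at hval
      by_cases hmem' : Label.vopen (g x) ∈ u
      · rw [if_pos hmem'] at hval
        have := Option.some.inj hval
        have h1 := congrArg Prod.fst this
        simp only at h1
        constructor
        · rintro ⟨_, hpos⟩; exact ⟨hmem', by rw [h1, hpos]⟩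
        · rintro ⟨_, hpos⟩; exact ⟨hmem, by rw [← h1, hpos]⟩
      · rw [if_neg hmem'] at hval
        cases hval
    · rw [if_neg hmem] at hval
      by_cases hmem' : Label.vopen (g x) ∈ u
      · rw [if_pos hmem'] at hval
        cases hval
      · constructor
        · rintro ⟨h, _⟩; exact absurd h hmem
        · rintro ⟨h, _⟩; exact absurd h hmem'
  · rw [mem_sblk_iff_of_valid_close hw, mem_sblk_iff_of_valid_close hu]
    by_cases hmem : Label.vopen x ∈ w
    · rw [if_pos hmem] at hval
      have hmemc : Label.vclose x ∈ w := valid_close_of_open hw hmem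
      by_cases hmem' : Label.vopen (g x) ∈ u
      · rw [if_pos hmem'] at hval
        have hmemc' : Label.vclose (g x) ∈ u := valid_close_of_open hu hmem'
        have := Option.some.inj hval
        have h2 := congrArg Prod.snd this
        simp only at h2
        constructor
        · rintro ⟨_, hpos⟩; exact ⟨hmemc', by rw [h2, hpos]⟩
        · rintro ⟨_, hpos⟩; exact ⟨hmemc, by rw [← h2, hpos]⟩
      · rw [if_neg hmem'] at hval
        cases hval
    · rw [if_neg hmem] at hval
      have hmemc : Label.vclose x ∉ w := fun hc => hmem (valid_open_of_close hw hc)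
      by_cases hmem' : Label.vopen (g x) ∈ u
      · rw [if_pos hmem'] at hval
        cases hval
      · have hmemc' : Label.vclose (g x) ∉ u := fun hc => hmem' (valid_open_of_close hu hc)
        constructor
        · rintro ⟨h, _⟩; exact absurd h hmemc
        · rintro ⟨h, _⟩; exact absurd h hmemc'

end Aux3

section Paths

variable {α V Q Q1 Q2 : Type}

lemma path_nil_eq {A : VA α V Q} {q q' : Q} (h : A.Path q [] q') : q = q' := by
  cases h; rfl

lemma path_cons_split {A : VA α V Q} {q q'' : Q} {l : Label α V} {w : List (Label α V)}
    (h : A.Path q (l :: w) q'') : ∃ q', A.trans q l q' ∧ A.Path q' w q'' := by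
  cases h with
  | cons ht hp => exact ⟨_, ht, hp⟩

lemma path_append {A : VA α V Q} {q q' q'' : Q} {u v : List (Label α V)}
    (h1 : A.Path q u q') (h2 : A.Path q' v q'') : A.Path q (u ++ v) q'' := by
  induction h1 with
  | nil => exact h2
  | cons ht _ ih => exact VA.Path.cons ht (ih h2)

lemma path_append_split {A : VA α V Q} {q q'' : Q} {u v : List (Label α V)}
    (h : A.Path q (u ++ v) q'') : ∃ q', A.Path q u q' ∧ A.Path q' v q'' := by
  induction u generalizing q with
  | nil => exact ⟨q, VA.Path.nil q, h⟩
  | cons l u ih =>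
    obtain ⟨q₁, ht, hp⟩ := path_cons_split h
    obtain ⟨q', h1, h2⟩ := ih hp
    exact ⟨q', VA.Path.cons ht h1, h2⟩

/-- The set of states reachable from a state in `T` reading `w`. -/
def reachSet (N : VA α V Q) (T : Set Q) (w : List (Label α V)) : Set Q :=
  {s' | ∃ s ∈ T, N.Path s w s'}

lemma reachSet_nil (N : VA α V Q) (T : Set Q) : reachSet N T [] = T := by
  ext s'
  constructor
  · rintro ⟨s, hs, hp⟩
    rwa [← path_nil_eq hp]
  · intro hs
    exact ⟨s', hs, VA.Path.nil s'⟩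

lemma reachSet_cons (N : VA α V Q) (T : Set Q) (l : Label α V) (w : List (Label α V)) :
    reachSet N T (l :: w) = reachSet N {s' | ∃ s ∈ T, N.trans s l s'} w := by
  ext s''
  constructor
  · rintro ⟨s, hs, hp⟩
    obtain ⟨s₁, ht, hp'⟩ := path_cons_split hp
    exact ⟨s₁, ⟨s, hs, ht⟩, hp'⟩
  · rintro ⟨s₁, ⟨s, hs, ht⟩, hp⟩
    exact ⟨s, hs, VA.Path.cons ht hp⟩

/-- Subset-construction determinization, with complemented acceptance. -/
def detVA (N : VA α V Q) : VA α V (Set Q) where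
  init := {N.init}
  final := {T | ∀ s ∈ T, s ∉ N.final}
  trans := fun T l T' => T' = {s' | ∃ s ∈ T, N.trans s l s'}

lemma detVA_path_iff (N : VA α V Q) (T T' : Set Q) (w : List (Label α V)) :
    (detVA N).Path T w T' ↔ T' = reachSet N T w := by
  induction w generalizing T with
  | nil =>
    rw [reachSet_nil]
    constructor
    · intro h; exact (path_nil_eq h).symm
    · rintro rfl; exact VA.Path.nil _
  | cons l w ih =>
    rw [reachSet_cons]
    constructor
    · intro h
      obtain ⟨T₁, ht, hp⟩ := path_cons_split h
      have : T₁ = {s' | ∃ s ∈ T, N.trans s l s'} := ht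
      rw [← this]
      exact (ih T₁).mp hp
    · intro h
      exact VA.Path.cons (show (detVA N).trans T l _ from rfl)
        ((ih {s' | ∃ s ∈ T, N.trans s l s'}).mpr h)

lemma detVA_accepts_iff (N : VA α V Q) (w : List (Label α V)) :
    (detVA N).AcceptsRef w ↔ ¬ N.AcceptsRef w := by
  constructor
  · rintro ⟨Tf, hTf, hp⟩ ⟨qf, hqf, hq⟩
    have hTeq : Tf = reachSet N {N.init} w := (detVA_path_iff N _ _ w).mp hp
    have : qf ∈ Tf := by
      rw [hTeq]
      exact ⟨N.init, rfl, hq⟩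
    exact hTf qf this hqf
  · intro hno
    refine ⟨reachSet N {N.init} w, ?_, (detVA_path_iff N _ _ w).mpr rfl⟩
    rintro s ⟨s₀, hs₀, hp⟩ hsf
    exact hno ⟨s, hsf, by rwa [show s₀ = N.init from hs₀] at hp⟩

/-- Product of two VAs. -/
def prodVA (A1 : VA α V Q1) (A2 : VA α V Q2) : VA α V (Q1 × Q2) where
  init := (A1.init, A2.init)
  final := {s | s.1 ∈ A1.final ∧ s.2 ∈ A2.final}
  trans := fun s l s' => A1.trans s.1 l s'.1 ∧ A2.trans s.2 l s'.2

lemma prodVA_path_iff (A1 : VA α V Q1) (A2 : VA α V Q2) (s s' : Q1 × Q2)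
    (w : List (Label α V)) :
    (prodVA A1 A2).Path s w s' ↔ A1.Path s.1 w s'.1 ∧ A2.Path s.2 w s'.2 := by
  induction w generalizing s with
  | nil =>
    constructor
    · intro h
      rw [path_nil_eq h]
      exact ⟨VA.Path.nil _, VA.Path.nil _⟩
    · rintro ⟨h1, h2⟩
      have e1 := path_nil_eq h1
      have e2 := path_nil_eq h2
      have : s = s' := Prod.ext e1 e2
      rw [this]
      exact VA.Path.nil _
  | cons l w ih =>
    constructor
    · intro h
      obtain ⟨s₁, ht, hp⟩ := path_cons_split h
      obtain ⟨h1, h2⟩ := (ih s₁).mp hp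
      exact ⟨VA.Path.cons ht.1 h1, VA.Path.cons ht.2 h2⟩
    · rintro ⟨h1, h2⟩
      obtain ⟨q₁, ht1, hp1⟩ := path_cons_split h1
      obtain ⟨q₂, ht2, hp2⟩ := path_cons_split h2
      exact VA.Path.cons (show (prodVA A1 A2).trans s l (q₁, q₂) from ⟨ht1, ht2⟩)
        ((ih (q₁, q₂)).mpr ⟨hp1, hp2⟩)

lemma prodVA_accepts_iff (A1 : VA α V Q1) (A2 : VA α V Q2) (w : List (Label α V)) :
    (prodVA A1 A2).AcceptsRef w ↔ A1.AcceptsRef w ∧ A2.AcceptsRef w := by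
  constructor
  · rintro ⟨qf, hqf, hp⟩
    obtain ⟨h1, h2⟩ := (prodVA_path_iff A1 A2 _ _ w).mp hp
    exact ⟨⟨qf.1, hqf.1, h1⟩, ⟨qf.2, hqf.2, h2⟩⟩
  · rintro ⟨⟨q1, hq1, hp1⟩, ⟨q2, hq2, hp2⟩⟩
    exact ⟨(q1, q2), ⟨hq1, hq2⟩, (prodVA_path_iff A1 A2 _ _ w).mpr ⟨hp1, hp2⟩⟩

end Paths

section NBdef

variable {α V : Type} [DecidableEq α] [DecidableEq V]

/-- Reconstruct a ref-word from blocks and letters. -/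
def recomb : List (List (Label α V)) → List α → List (Label α V)
  | bs, [] => bs.headI
  | bs, a :: as => bs.headI ++ Label.letter a :: recomb bs.tail as

lemma recomb_blocks (w : List (Label α V)) : recomb (blocks w) (letters w) = w := by
  induction w with
  | nil => rfl
  | cons c w ih =>
    cases c with
    | letter a =>
      rw [letters_cons_letter]
      show (blocks (Label.letter a :: w)).headI ++
        Label.letter a :: recomb (blocks (Label.letter a :: w)).tail (letters w) = _
      rw [show blocks (Label.letter a :: w) = [] :: blocks w from rfl]
      simpa using ih
    | vopen x =>
      rw [blocks_cons_marker (by simp), letters_cons_vopen]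
      rw [blocks_eq_cons w] at ih
      cases hl : letters w with
      | nil =>
        rw [hl] at ih
        show Label.vopen x :: (blocks w).headI = _
        have : (blocks w).headI = w := ih
        rw [this]
      | cons a as =>
        rw [hl] at ih
        show (Label.vopen x :: (blocks w).headI) ++
          Label.letter a :: recomb (blocks w).tail as = _
        have : (blocks w).headI ++ Label.letter a :: recomb (blocks w).tail as = w := ih
        simp only [List.cons_append, this]
    | vclose x =>
      rw [blocks_cons_marker (by simp), letters_cons_vclose]
      rw [blocks_eq_cons w] at ih
      cases hl : letters w with
      | nil =>
        rw [hl] at ih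
        show Label.vclose x :: (blocks w).headI = _
        have : (blocks w).headI = w := ih
        rw [this]
      | cons a as =>
        rw [hl] at ih
        show (Label.vclose x :: (blocks w).headI) ++
          Label.letter a :: recomb (blocks w).tail as = _
        have : (blocks w).headI ++ Label.letter a :: recomb (blocks w).tail as = w := ih
        simp only [List.cons_append, this]

lemma blocks_of_MO {l : List (Label α V)} (h : MO l) : blocks l = [l] := by
  induction l with
  | nil => rfl
  | cons c l ih =>
    obtain ⟨hc, hl⟩ := MO_cons h
    rw [blocks_cons_marker hc, ih hl]
    rfl

lemma sblk_of_MO_zero {l : List (Label α V)} (h : MO l) : sblk l 0 = l := by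
  rw [sblk, blocks_of_MO h]; rfl

lemma sblk_of_MO_succ {l : List (Label α V)} (h : MO l) (i : ℕ) : sblk l (i+1) = [] := by
  rw [sblk, blocks_of_MO h]; rfl

lemma blocks_MO_append {l v : List (Label α V)} (h : MO l) :
    blocks (l ++ v) = (l ++ (blocks v).headI) :: (blocks v).tail := by
  induction l with
  | nil => simpa using blocks_eq_cons v
  | cons c l ih =>
    obtain ⟨hc, hl⟩ := MO_cons h
    rw [List.cons_append, blocks_cons_marker hc, ih hl]
    simp

lemma sblk_MO_append_zero {l : List (Label α V)} (h : MO l) (a : α)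
    (r : List (Label α V)) : sblk (l ++ Label.letter a :: r) 0 = l := by
  rw [sblk, blocks_MO_append h]
  show l ++ (blocks (Label.letter a :: r)).headI = l
  rw [show blocks (Label.letter a :: r) = [] :: blocks r from rfl]
  simp

lemma sblk_MO_append_succ {l : List (Label α V)} (h : MO l) (a : α)
    (r : List (Label α V)) (i : ℕ) :
    sblk (l ++ Label.letter a :: r) (i + 1) = sblk r i := by
  rw [sblk, blocks_MO_append h]
  show ((blocks (Label.letter a :: r)).tail).getD i [] = _
  rw [show blocks (Label.letter a :: r) = [] :: blocks r from rfl]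
  rfl

/-- The set of labels of a list. -/
def lset (l : List (Label α V)) : Set (Label α V) := {c | c ∈ l}

@[simp] lemma mem_lset {c : Label α V} {l : List (Label α V)} : c ∈ lset l ↔ c ∈ l :=
  Iff.rfl

@[simp] lemma lset_nil : lset ([] : List (Label α V)) = ∅ := by
  ext c; simp [lset]

lemma lset_cons (c : Label α V) (l : List (Label α V)) :
    lset (c :: l) = insert c (lset l) := by
  ext y; simp [lset]

/-- Combination of a plain marker set and an annotated marker set into a marker set
over doubled variables. -/
def comb (S T : Set (Label α V)) : Set (Label α (V ⊕ V)) := fun c =>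
  match c with
  | Label.letter _ => False
  | Label.vopen (Sum.inl x) => Label.vopen x ∈ S
  | Label.vopen (Sum.inr x) => Label.vopen x ∈ T
  | Label.vclose (Sum.inl x) => Label.vclose x ∈ S
  | Label.vclose (Sum.inr x) => Label.vclose x ∈ T

@[simp] lemma comb_letter {S T : Set (Label α V)} {a : α} :
    Label.letter a ∈ comb S T ↔ False := Iff.rfl
@[simp] lemma comb_vopen_inl {S T : Set (Label α V)} {x : V} :
    Label.vopen (Sum.inl x) ∈ comb S T ↔ Label.vopen x ∈ S := Iff.rfl
@[simp] lemma comb_vopen_inr {S T : Set (Label α V)} {x : V} :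
    Label.vopen (Sum.inr x) ∈ comb S T ↔ Label.vopen x ∈ T := Iff.rfl
@[simp] lemma comb_vclose_inl {S T : Set (Label α V)} {x : V} :
    Label.vclose (Sum.inl x) ∈ comb S T ↔ Label.vclose x ∈ S := Iff.rfl
@[simp] lemma comb_vclose_inr {S T : Set (Label α V)} {x : V} :
    Label.vclose (Sum.inr x) ∈ comb S T ↔ Label.vclose x ∈ T := Iff.rfl

lemma comb_empty : comb (∅ : Set (Label α V)) ∅ = ∅ := by
  ext c
  cases c with
  | letter a => simp
  | vopen y => cases y <;> simp
  | vclose y => cases y <;> simp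

variable {QB QA : Type}

/-- The "bad-witness" automaton: reads a ref-word `w` and guesses a run of `B` (the
rule automaton) on a ref-word `u` and a run of `A` on a ref-word `w'`, letter-synchronized
with `w`, such that per-block marker sets align and some block of `w'` differs from `w`. -/
def NB (B : VA α (V ⊕ V) QB) (A : VA α V QA) :
    VA α V (QB × QA × Set (Label α V) × Bool) where
  init := (B.init, A.init, ∅, false)
  final := fun s => ∃ l' lB p₁ q₁, MO l' ∧ MO lB ∧
      lset lB = comb s.2.2.1 (lset l') ∧
      B.Path s.1 lB p₁ ∧ p₁ ∈ B.final ∧ A.Path s.2.1 l' q₁ ∧ q₁ ∈ A.final ∧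
      (s.2.2.2 = true ∨ s.2.2.1 ≠ lset l')
  trans := fun s l s' =>
    match l with
    | Label.letter a => ∃ l' lB p₁ q₁, MO l' ∧ MO lB ∧
        lset lB = comb s.2.2.1 (lset l') ∧
        B.Path s.1 lB p₁ ∧ B.trans p₁ (Label.letter a) s'.1 ∧
        A.Path s.2.1 l' q₁ ∧ A.trans q₁ (Label.letter a) s'.2.1 ∧
        s'.2.2.1 = ∅ ∧ (s.2.2.2 = true → s'.2.2.2 = true) ∧
        (s'.2.2.2 = true → s.2.2.2 = true ∨ s.2.2.1 ≠ lset l')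
    | Label.vopen x => s' = (s.1, s.2.1, insert (Label.vopen x) s.2.2.1, s.2.2.2)
    | Label.vclose x => s' = (s.1, s.2.1, insert (Label.vclose x) s.2.2.1, s.2.2.2)

lemma NB_path_acc (B : VA α (V ⊕ V) QB) (A : VA α V QA) {b : List (Label α V)}
    (hb : MO b) (p : QB) (q : QA) (S : Set (Label α V)) (f : Bool) :
    (NB B A).Path (p, q, S, f) b (p, q, S ∪ lset b, f) := by
  induction b generalizing S with
  | nil =>
    rw [show S ∪ lset ([] : List (Label α V)) = S by simp]
    exact VA.Path.nil _
  | cons c b ih =>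
    obtain ⟨hc, hb'⟩ := MO_cons hb
    have hset : S ∪ lset (c :: b) = insert c S ∪ lset b := by
      rw [lset_cons]; ext y; simp; tauto
    rw [hset]
    have htrans : (NB B A).trans (p, q, S, f) c (p, q, insert c S, f) := by
      cases c with
      | letter a => exact absurd rfl (hc a)
      | vopen x => rfl
      | vclose x => rfl
    exact VA.Path.cons htrans (by first | exact ih hb' (insert c S) | exact ih (insert c S) hb' | exact ih hb')

end NBdef

section NBsound

variable {α V QB QA : Type} [DecidableEq α] [DecidableEq V]

lemma NB_sound (B : VA α (V ⊕ V) QB) (A : VA α V QA) :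
    ∀ (w : List (Label α V)) (p : QB) (q : QA) (S : Set (Label α V)) (f : Bool)
      (s' : QB × QA × Set (Label α V) × Bool),
      (NB B A).Path (p, q, S, f) w s' → s' ∈ (NB B A).final →
      ∃ (u : List (Label α (V ⊕ V))) (w' : List (Label α V)) (pf : QB) (qf : QA),
        B.Path p u pf ∧ pf ∈ B.final ∧ A.Path q w' qf ∧ qf ∈ A.final ∧
        letters u = letters w ∧ letters w' = letters w ∧
        lset (sblk u 0) = comb (S ∪ lset (sblk w 0)) (lset (sblk w' 0)) ∧
        (∀ i, lset (sblk u (i+1)) = comb (lset (sblk w (i+1))) (lset (sblk w' (i+1)))) ∧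
        (f = true ∨ S ∪ lset (sblk w 0) ≠ lset (sblk w' 0) ∨
          ∃ i, lset (sblk w (i+1)) ≠ lset (sblk w' (i+1))) := by
  intro w
  induction w with
  | nil =>
    intro p q S f s' hp hf
    have hs' : s' = (p, q, S, f) := (path_nil_eq hp).symm
    subst hs'
    obtain ⟨l', lB, p₁, q₁, hl', hlB, hcomb, hBp, hBf, hAp, hAf, hflag⟩ := hf
    refine ⟨lB, l', p₁, q₁, hBp, hBf, hAp, hAf, ?_, ?_, ?_, ?_, ?_⟩
    · simp [letters_eq_nil_of_MO hlB]
    · simp [letters_eq_nil_of_MO hl']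
    · rw [sblk_of_MO_zero hlB, sblk_of_MO_zero hl', sblk_nil]
      simpa using hcomb
    · intro i
      rw [sblk_of_MO_succ hlB _, sblk_of_MO_succ hl' _, sblk_nil]
      simp [comb_empty]
    · rcases hflag with h | h
      · exact Or.inl h
      · refine Or.inr (Or.inl ?_)
        rw [sblk_nil, sblk_of_MO_zero hl']
        simpa using h
  | cons c w ih =>
    intro p q S f s' hp hf
    obtain ⟨s₁, ht, hp'⟩ := path_cons_split hp
    cases c with
    | vopen x =>
      have hs₁ : s₁ = (p, q, insert (Label.vopen x) S, f) := ht
      subst hs₁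
      obtain ⟨u, w', pf, qf, h1, h2, h3, h4, h5, h6, h7, h8, h9⟩ :=
        ih p q (insert (Label.vopen x) S) f s' hp' hf
      have hset : S ∪ lset (sblk (Label.vopen x :: w) 0) =
          insert (Label.vopen x) S ∪ lset (sblk w 0) := by
        rw [sblk_cons_marker_zero (by simp), lset_cons]
        ext y; simp; tauto
      refine ⟨u, w', pf, qf, h1, h2, h3, h4, ?_, ?_, ?_, ?_, ?_⟩
      · rwa [letters_cons_vopen]
      · rwa [letters_cons_vopen]
      · rw [hset]; exact h7
      · intro i; rw [sblk_cons_marker_succ (by simp)]; exact h8 i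
      · rcases h9 with h | h | h
        · exact Or.inl h
        · exact Or.inr (Or.inl (by rw [hset]; exact h))
        · obtain ⟨i, hi⟩ := h
          exact Or.inr (Or.inr ⟨i, by rw [sblk_cons_marker_succ (by simp)]; exact hi⟩)
    | vclose x =>
      have hs₁ : s₁ = (p, q, insert (Label.vclose x) S, f) := ht
      subst hs₁
      obtain ⟨u, w', pf, qf, h1, h2, h3, h4, h5, h6, h7, h8, h9⟩ :=
        ih p q (insert (Label.vclose x) S) f s' hp' hf
      have hset : S ∪ lset (sblk (Label.vclose x :: w) 0) =
          insert (Label.vclose x) S ∪ lset (sblk w 0) := by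
        rw [sblk_cons_marker_zero (by simp), lset_cons]
        ext y; simp; tauto
      refine ⟨u, w', pf, qf, h1, h2, h3, h4, ?_, ?_, ?_, ?_, ?_⟩
      · rwa [letters_cons_vclose]
      · rwa [letters_cons_vclose]
      · rw [hset]; exact h7
      · intro i; rw [sblk_cons_marker_succ (by simp)]; exact h8 i
      · rcases h9 with h | h | h
        · exact Or.inl h
        · exact Or.inr (Or.inl (by rw [hset]; exact h))
        · obtain ⟨i, hi⟩ := h
          exact Or.inr (Or.inr ⟨i, by rw [sblk_cons_marker_succ (by simp)]; exact hi⟩)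
    | letter a =>
      obtain ⟨p2, q2, S2, f2⟩ := s₁
      obtain ⟨l', lB, p₁, q₁, hl', hlB, hcomb, hBp, hBt, hAp, hAt, hS2, hf1, hf2⟩ := ht
      have hS2' : S2 = ∅ := hS2
      subst hS2'
      obtain ⟨u₂, w₂', pf, qf, h1, h2, h3, h4, h5, h6, h7, h8, h9⟩ :=
        ih p2 q2 ∅ f2 s' hp' hf
      refine ⟨lB ++ Label.letter a :: u₂, l' ++ Label.letter a :: w₂', pf, qf, ?_, h2,
        ?_, h4, ?_, ?_, ?_, ?_, ?_⟩
      · exact path_append hBp (VA.Path.cons hBt h1)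
      · exact path_append hAp (VA.Path.cons hAt h3)
      · rw [letters_append, letters_eq_nil_of_MO hlB, letters_cons_letter, h5,
          letters_cons_letter]
        rfl
      · rw [letters_append, letters_eq_nil_of_MO hl', letters_cons_letter, h6,
          letters_cons_letter]
        rfl
      · rw [sblk_MO_append_zero hlB, sblk_MO_append_zero hl', sblk_cons_letter_zero]
        simpa using hcomb
      · intro i
        rw [sblk_MO_append_succ hlB, sblk_MO_append_succ hl', sblk_cons_letter_succ]
        cases i with
        | zero => simpa using h7
        | succ j => exact h8 j
      · rcases h9 with h | h | h
        · rcases hf2 h with h' | h'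
          · exact Or.inl h'
          · refine Or.inr (Or.inl ?_)
            rw [sblk_cons_letter_zero, sblk_MO_append_zero hl']
            simpa using h'
        · refine Or.inr (Or.inr ⟨0, ?_⟩)
          rw [sblk_cons_letter_succ, sblk_MO_append_succ hl']
          simpa using h
        · obtain ⟨i, hi⟩ := h
          refine Or.inr (Or.inr ⟨i + 1, ?_⟩)
          rw [sblk_cons_letter_succ, sblk_MO_append_succ hl']
          exact hi

end NBsound

section NBcomplete

variable {α V QB QA : Type} [DecidableEq α] [DecidableEq V]

lemma NB_complete (B : VA α (V ⊕ V) QB) (A : VA α V QA) :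
    ∀ (as : List α) (b0w b0w' : List (Label α V)) (b0u : List (Label α (V ⊕ V)))
      (tw tw' : List (List (Label α V))) (tu : List (List (Label α (V ⊕ V))))
      (p : QB) (q : QA) (S : Set (Label α V)) (f : Bool) (pf : QB) (qf : QA),
      tw.length = as.length → tu.length = as.length → tw'.length = as.length →
      MO b0w → (∀ b ∈ tw, MO b) → MO b0u → (∀ b ∈ tu, MO b) →
      MO b0w' → (∀ b ∈ tw', MO b) →
      lset b0u = comb (S ∪ lset b0w) (lset b0w') →
      (∀ i, lset (tu.getD i []) = comb (lset (tw.getD i [])) (lset (tw'.getD i []))) →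
      B.Path p (recomb (b0u :: tu) as) pf → pf ∈ B.final →
      A.Path q (recomb (b0w' :: tw') as) qf → qf ∈ A.final →
      (f = true ∨ S ∪ lset b0w ≠ lset b0w' ∨
        ∃ i, lset (tw.getD i []) ≠ lset (tw'.getD i [])) →
      ∃ s', s' ∈ (NB B A).final ∧ (NB B A).Path (p, q, S, f) (recomb (b0w :: tw) as) s' := by
  intro as
  induction as with
  | nil =>
    intro b0w b0w' b0u tw tw' tu p q S f pf qf hlw hlu hlw' hm0w hmtw hm0u hmtu hm0w'
      hmtw' hc0 hcT hBp hBf hAp hAf hflag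
    have htw : tw = [] := List.length_eq_zero_iff.mp (by simpa using hlw)
    have htw' : tw' = [] := List.length_eq_zero_iff.mp (by simpa using hlw')
    subst htw; subst htw'
    refine ⟨(p, q, S ∪ lset b0w, f), ?_, ?_⟩
    · refine ⟨b0w', b0u, pf, qf, hm0w', hm0u, hc0, hBp, hBf, hAp, hAf, ?_⟩
      rcases hflag with h | h | ⟨i, hi⟩
      · exact Or.inl h
      · exact Or.inr h
      · simp at hi
    · exact NB_path_acc B A hm0w p q S f
  | cons a as ih =>
    intro b0w b0w' b0u tw tw' tu p q S f pf qf hlw hlu hlw' hm0w hmtw hm0u hmtu hm0w'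
      hmtw' hc0 hcT hBp hBf hAp hAf hflag
    cases tw with
    | nil => simp at hlw
    | cons b1w tw₂ =>
    cases tu with
    | nil => simp at hlu
    | cons b1u tu₂ =>
    cases tw' with
    | nil => simp at hlw'
    | cons b1w' tw₂' =>
    have hBrec : recomb (b0u :: b1u :: tu₂) (a :: as) =
        b0u ++ Label.letter a :: recomb (b1u :: tu₂) as := rfl
    rw [hBrec] at hBp
    obtain ⟨p₁, hBp1, hBp2⟩ := path_append_split hBp
    obtain ⟨p'', hBt, hBp3⟩ := path_cons_split hBp2
    have hArec : recomb (b0w' :: b1w' :: tw₂') (a :: as) =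
        b0w' ++ Label.letter a :: recomb (b1w' :: tw₂') as := rfl
    rw [hArec] at hAp
    obtain ⟨q₁, hAp1, hAp2⟩ := path_append_split hAp
    obtain ⟨q'', hAt, hAp3⟩ := path_cons_split hAp2
    have hlw₂ : tw₂.length = as.length := by simpa using hlw
    have hlu₂ : tu₂.length = as.length := by simpa using hlu
    have hlw₂' : tw₂'.length = as.length := by simpa using hlw'
    have hc0' : lset b1u = comb (∅ ∪ lset b1w) (lset b1w') := by
      have := hcT 0
      simpa using this
    have hcT' : ∀ i, lset (tu₂.getD i []) =
        comb (lset (tw₂.getD i [])) (lset (tw₂'.getD i [])) := by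
      intro i
      exact hcT (i + 1)
    by_cases hcase : f = true ∨ S ∪ lset b0w ≠ lset b0w'
    · -- raise the flag
      have ht : (NB B A).trans (p, q, S ∪ lset b0w, f) (Label.letter a)
          (p'', q'', ∅, true) :=
        ⟨b0w', b0u, p₁, q₁, hm0w', hm0u, hc0, hBp1, hBt, hAp1, hAt, rfl,
          fun _ => rfl, fun _ => hcase⟩
      obtain ⟨s'', hfin, hpath⟩ := ih b1w b1w' b1u tw₂ tw₂' tu₂ p'' q'' ∅ true pf qf
        hlw₂ hlu₂ hlw₂' (hmtw b1w (by simp)) (fun b hb => hmtw b (by simp [hb]))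
        (hmtu b1u (by simp)) (fun b hb => hmtu b (by simp [hb]))
        (hmtw' b1w' (by simp)) (fun b hb => hmtw' b (by simp [hb]))
        hc0' hcT' hBp3 hBf hAp3 hAf (Or.inl rfl)
      refine ⟨s'', hfin, ?_⟩
      have : recomb (b0w :: b1w :: tw₂) (a :: as) =
          b0w ++ Label.letter a :: recomb (b1w :: tw₂) as := rfl
      rw [this]
      exact path_append (NB_path_acc B A hm0w p q S f) (VA.Path.cons ht hpath)
    · -- flag stays down
      push_neg at hcase
      obtain ⟨hnf, hnd⟩ := hcase
      have hf : f = false := by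
        cases f
        · rfl
        · exact absurd rfl hnf
      subst hf
      have ht : (NB B A).trans (p, q, S ∪ lset b0w, false) (Label.letter a)
          (p'', q'', ∅, false) :=
        ⟨b0w', b0u, p₁, q₁, hm0w', hm0u, hc0, hBp1, hBt, hAp1, hAt, rfl,
          fun h => Bool.noConfusion h, fun h => Bool.noConfusion h⟩
      have hflag' : (false : Bool) = true ∨ ∅ ∪ lset b1w ≠ lset b1w' ∨
          ∃ i, lset (tw₂.getD i []) ≠ lset (tw₂'.getD i []) := by
        rcases hflag with h | h | ⟨i, hi⟩
        · exact absurd h hnf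
        · exact absurd hnd h
        · cases i with
          | zero =>
            refine Or.inr (Or.inl ?_)
            simpa using hi
          | succ j => exact Or.inr (Or.inr ⟨j, hi⟩)
      obtain ⟨s'', hfin, hpath⟩ := ih b1w b1w' b1u tw₂ tw₂' tu₂ p'' q'' ∅ false pf qf
        hlw₂ hlu₂ hlw₂' (hmtw b1w (by simp)) (fun b hb => hmtw b (by simp [hb]))
        (hmtu b1u (by simp)) (fun b hb => hmtu b (by simp [hb]))
        (hmtw' b1w' (by simp)) (fun b hb => hmtw' b (by simp [hb]))
        hc0' hcT' hBp3 hBf hAp3 hAf hflag'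
      refine ⟨s'', hfin, ?_⟩
      have : recomb (b0w :: b1w :: tw₂) (a :: as) =
          b0w ++ Label.letter a :: recomb (b1w :: tw₂) as := rfl
      rw [this]
      exact path_append (NB_path_acc B A hm0w p q S false) (VA.Path.cons ht hpath)

end NBcomplete

section Wrappers

variable {α V QB QA : Type} [DecidableEq α] [DecidableEq V]

lemma sblk_zero_headI (v : List (Label α V)) : sblk v 0 = (blocks v).headI := by
  rw [sblk, blocks_eq_cons v]
  rfl

lemma sblk_succ_tail (v : List (Label α V)) (i : ℕ) :
    sblk v (i + 1) = (blocks v).tail.getD i [] := by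
  rw [sblk]
  conv_lhs => rw [blocks_eq_cons v]
  rfl

lemma MO_headI_blocks (v : List (Label α V)) : MO (blocks v).headI := by
  intro a ha
  have : Label.letter a ∈ sblk v 0 := by rw [sblk_zero_headI]; exact ha
  exact ((mem_of_mem_sblk this).2 a) rfl

lemma MO_mem_tail_blocks {v : List (Label α V)} {b : List (Label α V)}
    (hb : b ∈ (blocks v).tail) : MO b := by
  intro a ha
  obtain ⟨i, hi, hget⟩ := List.getElem_of_mem hb
  have : Label.letter a ∈ sblk v (i + 1) := by
    rw [sblk_succ_tail, List.getD_eq_getElem _ _ hi, hget]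
    exact ha
  exact ((mem_of_mem_sblk this).2 a) rfl

lemma tail_blocks_length (v : List (Label α V)) :
    (blocks v).tail.length = (letters v).length := by
  rw [List.length_tail, blocks_length]
  simp

/-- Completeness wrapper: a dominating configuration yields acceptance by `NB`. -/
lemma NB_accepts_of_bad (B : VA α (V ⊕ V) QB) (A : VA α V QA)
    (hseqB : B.Sequential) (hseqA : A.Sequential)
    {w w' : List (Label α V)} {u : List (Label α (V ⊕ V))}
    (hw : ValidRef w)
    (hu : B.AcceptsRef u) (hlu : letters u = letters w)
    (hw' : A.AcceptsRef w') (hlw' : letters w' = letters w)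
    (hinl : ∀ x, refMapping u (Sum.inl x) = refMapping w x)
    (hinr : ∀ x, refMapping u (Sum.inr x) = refMapping w' x)
    (hne : refMapping w' ≠ refMapping w) :
    (NB B A).AcceptsRef w := by
  have hvu : ValidRef u := hseqB u hu
  have hvw' : ValidRef w' := hseqA w' hw'
  have hcondl := blocks_cond_of_refMapping Sum.inl hw hvu hinl
  have hcondr := blocks_cond_of_refMapping Sum.inr hvw' hvu hinr
  have hcorr : ∀ i, lset (sblk u i) = comb (lset (sblk w i)) (lset (sblk w' i)) := by
    intro i
    ext c
    cases c with
    | letter a =>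
      simp only [mem_lset, comb_letter, iff_false]
      intro hc
      exact ((mem_of_mem_sblk hc).2 a) rfl
    | vopen y =>
      cases y with
      | inl x =>
        simp only [mem_lset, comb_vopen_inl]
        exact ((hcondl i x).1).symm
      | inr x =>
        simp only [mem_lset, comb_vopen_inr]
        exact ((hcondr i x).1).symm
    | vclose y =>
      cases y with
      | inl x =>
        simp only [mem_lset, comb_vclose_inl]
        exact ((hcondl i x).2).symm
      | inr x =>
        simp only [mem_lset, comb_vclose_inr]
        exact ((hcondr i x).2).symm
  have hdiff : ∃ i, lset (sblk w i) ≠ lset (sblk w' i) := by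
    by_contra hno
    push_neg at hno
    apply hne
    refine funext fun x => ?_
    refine refMapping_eq_of_blocks id hw hvw' (fun i x => ?_) x
    constructor
    · constructor
      · intro hc
        have : Label.vopen x ∈ lset (sblk w' i) := by rw [← hno i]; exact hc
        exact this
      · intro hc
        have : Label.vopen x ∈ lset (sblk w i) := by rw [hno i]; exact hc
        exact this
    · constructor
      · intro hc
        have : Label.vclose x ∈ lset (sblk w' i) := by rw [← hno i]; exact hc
        exact this
      · intro hc
        have : Label.vclose x ∈ lset (sblk w i) := by rw [hno i]; exact hc
        exact this
  obtain ⟨pf, hBf, hBp⟩ := hu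
  obtain ⟨qf, hAf, hAp⟩ := hw'
  have hu_eq : recomb ((blocks u).headI :: (blocks u).tail) (letters w) = u := by
    rw [← blocks_eq_cons u, ← hlu, recomb_blocks]
  have hw'_eq : recomb ((blocks w').headI :: (blocks w').tail) (letters w) = w' := by
    rw [← blocks_eq_cons w', ← hlw', recomb_blocks]
  have hw_eq : recomb ((blocks w).headI :: (blocks w).tail) (letters w) = w := by
    rw [← blocks_eq_cons w, recomb_blocks]
  have hBp' : B.Path B.init (recomb ((blocks u).headI :: (blocks u).tail) (letters w)) pf := by
    rw [hu_eq]; exact hBp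
  have hAp' : A.Path A.init (recomb ((blocks w').headI :: (blocks w').tail) (letters w)) qf := by
    rw [hw'_eq]; exact hAp
  have h0 := hcorr 0
  rw [sblk_zero_headI, sblk_zero_headI, sblk_zero_headI] at h0
  have hc0 : lset (blocks u).headI =
      comb ((∅ : Set (Label α V)) ∪ lset (blocks w).headI) (lset (blocks w').headI) := by
    rw [Set.empty_union]; exact h0
  have hcT : ∀ i, lset ((blocks u).tail.getD i []) =
      comb (lset ((blocks w).tail.getD i [])) (lset ((blocks w').tail.getD i [])) := by
    intro i
    have := hcorr (i + 1)
    rwa [sblk_succ_tail, sblk_succ_tail, sblk_succ_tail] at this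
  have hflag : (false : Bool) = true ∨
      (∅ : Set (Label α V)) ∪ lset (blocks w).headI ≠ lset (blocks w').headI ∨
      ∃ i, lset ((blocks w).tail.getD i []) ≠ lset ((blocks w').tail.getD i []) := by
    obtain ⟨i, hi⟩ := hdiff
    cases i with
    | zero =>
      refine Or.inr (Or.inl ?_)
      rw [Set.empty_union, ← sblk_zero_headI, ← sblk_zero_headI]
      exact hi
    | succ j =>
      refine Or.inr (Or.inr ⟨j, ?_⟩)
      rw [← sblk_succ_tail, ← sblk_succ_tail]
      exact hi
  obtain ⟨s', hfin, hpath⟩ := NB_complete B A (letters w)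
    (blocks w).headI (blocks w').headI (blocks u).headI
    (blocks w).tail (blocks w').tail (blocks u).tail
    B.init A.init ∅ false pf qf
    (by rw [tail_blocks_length]) (by rw [tail_blocks_length, hlu])
    (by rw [tail_blocks_length, hlw'])
    (MO_headI_blocks w) (fun b hb => MO_mem_tail_blocks hb)
    (MO_headI_blocks u) (fun b hb => MO_mem_tail_blocks hb)
    (MO_headI_blocks w') (fun b hb => MO_mem_tail_blocks hb)
    hc0 hcT hBp' hBf hAp' hAf hflag
  rw [hw_eq] at hpath
  exact ⟨s', hfin, hpath⟩

/-- Soundness wrapper: acceptance by `NB` on a valid word exhibits a dominating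
configuration. -/
lemma bad_of_NB_accepts (B : VA α (V ⊕ V) QB) (A : VA α V QA)
    (hseqB : B.Sequential) (hseqA : A.Sequential)
    {w : List (Label α V)} (hw : ValidRef w) (hacc : (NB B A).AcceptsRef w) :
    ∃ (u : List (Label α (V ⊕ V))) (w' : List (Label α V)),
      B.AcceptsRef u ∧ letters u = letters w ∧ A.AcceptsRef w' ∧ letters w' = letters w ∧
      (∀ x, refMapping u (Sum.inl x) = refMapping w x) ∧
      (∀ x, refMapping u (Sum.inr x) = refMapping w' x) ∧
      refMapping w' ≠ refMapping w := by
  obtain ⟨s', hfin, hpath⟩ := hacc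
  obtain ⟨u, w', pf, qf, h1, h2, h3, h4, h5, h6, h7, h8, h9⟩ :=
    NB_sound B A w B.init A.init ∅ false s' hpath hfin
  have hu : B.AcceptsRef u := ⟨pf, h2, h1⟩
  have hw'acc : A.AcceptsRef w' := ⟨qf, h4, h3⟩
  have hvu : ValidRef u := hseqB u hu
  have hvw' : ValidRef w' := hseqA w' hw'acc
  have hcorr : ∀ i, lset (sblk u i) = comb (lset (sblk w i)) (lset (sblk w' i)) := by
    intro i
    cases i with
    | zero => simpa using h7
    | succ j => exact h8 j
  have hmem : ∀ i (c : Label α (V ⊕ V)), c ∈ sblk u i ↔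
      c ∈ comb (lset (sblk w i)) (lset (sblk w' i)) := by
    intro i c
    rw [← mem_lset, hcorr i]
  have hcondl : ∀ i x, (Label.vopen x ∈ sblk w i ↔ Label.vopen (Sum.inl x) ∈ sblk u i) ∧
      (Label.vclose x ∈ sblk w i ↔ Label.vclose (Sum.inl x) ∈ sblk u i) := by
    intro i x
    exact ⟨by simpa using (hmem i (Label.vopen (Sum.inl x))).symm,
      by simpa using (hmem i (Label.vclose (Sum.inl x))).symm⟩
  have hcondr : ∀ i x, (Label.vopen x ∈ sblk w' i ↔ Label.vopen (Sum.inr x) ∈ sblk u i) ∧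
      (Label.vclose x ∈ sblk w' i ↔ Label.vclose (Sum.inr x) ∈ sblk u i) := by
    intro i x
    exact ⟨by simpa using (hmem i (Label.vopen (Sum.inr x))).symm,
      by simpa using (hmem i (Label.vclose (Sum.inr x))).symm⟩
  have hinl := refMapping_eq_of_blocks Sum.inl hw hvu hcondl
  have hinr := refMapping_eq_of_blocks Sum.inr hvw' hvu hcondr
  have hne : refMapping w' ≠ refMapping w := by
    rcases h9 with h | h | ⟨i, hi⟩
    · exact absurd h (by simp)
    · have hne0 : lset (sblk w 0) ≠ lset (sblk w' 0) := by simpa using h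
      exact (refMapping_ne_of_sblk_ne hw hvw' hne0).symm
    · exact (refMapping_ne_of_sblk_ne hw hvw' hi).symm
  exact ⟨u, w', hu, h5, hw'acc, h6, hinl, hinr, hne⟩

end Wrappers

instance instFintypeLabel {α V : Type} [Fintype α] [Fintype V] [DecidableEq α]
    [DecidableEq V] : Fintype (Label α V) :=
  Fintype.ofSurjective (fun s : α ⊕ V ⊕ V => match s with
    | Sum.inl a => Label.letter a
    | Sum.inr (Sum.inl x) => Label.vopen x
    | Sum.inr (Sum.inr x) => Label.vclose x)
    (by
      intro c
      cases c with
      | letter a => exact ⟨Sum.inl a, rfl⟩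
      | vopen x => exact ⟨Sum.inr (Sum.inl x), rfl⟩
      | vclose x => exact ⟨Sum.inr (Sum.inr x), rfl⟩)

/-- For every regular spanner `P` on a variable set and every domination
rule `D` that is itself a regular spanner, the skyline `η_D P` is a regular spanner. -/
theorem skyline_of_regular_isRegular {α V : Type} [Fintype α] [DecidableEq α]
    [Fintype V] [DecidableEq V]
    (P : Spanner α V) (hP : IsRegular P)
    (D : Spanner α (V ⊕ V)) (hD : IsRegular D) (hDom : IsDomRule D) :
    IsRegular (skyline P (ruleRel D)) := by
  classical
  obtain ⟨QA, instQA, A, hseqA, hPA⟩ := hP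
  obtain ⟨QB, instQB, B, hseqB, hDB⟩ := hD
  subst hPA
  subst hDB
  letI := instQA
  letI := instQB
  refine ⟨QA × Set (QB × QA × Set (Label α V) × Bool), inferInstance,
    prodVA A (detVA (NB B A)), ?_, ?_⟩
  · intro w hacc
    exact hseqA w ((prodVA_accepts_iff _ _ w).mp hacc).1
  · funext d
    ext m
    constructor
    · rintro ⟨w, hacc, hlet, hmap⟩
      obtain ⟨haccA, haccD⟩ := (prodVA_accepts_iff _ _ w).mp hacc
      have hvw : ValidRef w := hseqA w haccA
      refine ⟨⟨w, haccA, hlet, hmap⟩, ?_⟩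
      rintro m' ⟨w', hw'acc, hw'let, hw'map⟩ hne ⟨mbar, ⟨u, huacc, hulet, humap⟩, hbl, hbr⟩
      have hnb : (NB B A).AcceptsRef w :=
        NB_accepts_of_bad B A hseqB hseqA hvw huacc (hulet.trans hlet.symm)
          hw'acc (hw'let.trans hlet.symm)
          (fun x => by rw [humap, hbl x, ← hmap])
          (fun x => by rw [humap, hbr x, ← hw'map])
          (by rw [hw'map, hmap]; exact hne)
      exact (detVA_accepts_iff _ w).mp haccD hnb
    · rintro ⟨⟨w, haccA, hlet, hmap⟩, hsky⟩
      have hvw : ValidRef w := hseqA w haccA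
      have hnb : ¬ (NB B A).AcceptsRef w := by
        intro hacc
        obtain ⟨u, w', huacc, hulet, hw'acc, hw'let, hinl, hinr, hne⟩ :=
          bad_of_NB_accepts B A hseqB hseqA hvw hacc
        exact hsky (refMapping w') ⟨w', hw'acc, hw'let.trans hlet, rfl⟩
          (by rw [← hmap]; exact hne)
          ⟨refMapping u, ⟨u, huacc, hulet.trans hlet, rfl⟩,
            fun x => by rw [hinl x, hmap], fun x => hinr x⟩
      exact ⟨w, (prodVA_accepts_iff _ _ w).mpr ⟨haccA, (detVA_accepts_iff _ w).mpr hnb⟩,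
        hlet, hmap⟩
end DocSpanners
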